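/- Let a locally compact abelian group G act via α on a Hausdorff uniform space (X, 𝒰) with 𝒰 G-invariant, and let x ∈ X be pseudo Bochner-type almost periodic (for every U ∈ 𝒰 the set P_U(x) = {t ∈ G : (α(t,x), x) ∈ U} is finitely relatively dense). Then x is Bochner-type almost periodic (the orbit closure H_x is compact) if and only if H_x is complete in the uniformity inherited from 𝒰. -/

import Mathlib

open Uniformity Pointwise

/-- Let a locally compact abelian group `G` act via `α` on a Hausdorff uniform
space `(X, 𝒰)` with `𝒰` `G`-invariant, and let `x` be pseudo Bochner-type almost periodic.
Then the orbit closure `H_x` is compact iff `H_x` is complete. -/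
theorem stmt5 {G X : Type*}
    [AddCommGroup G] [TopologicalSpace G] [IsTopologicalAddGroup G]
    [LocallyCompactSpace G] [T2Space G]
    [UniformSpace X] [T2Space X]
    (α : G → X → X)
    (hzero : ∀ x, α 0 x = x)
    (hadd : ∀ s t x, α s (α t x) = α (s + t) x)
    (hinv : ∀ U ∈ 𝓤 X, ∃ U' ∈ 𝓤 X, ∀ (t : G), ∀ p : X × X, p ∈ U' →
      (α t p.1, α t p.2) ∈ U)
    (x : X)
    (hap : ∀ U ∈ 𝓤 X, ∃ F : Set G, F.Finite ∧ {t : G | (α t x, x) ∈ U} + F = Set.univ) :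
    IsCompact (closure (Set.range fun t : G => α t x)) ↔
      IsComplete (closure (Set.range fun t : G => α t x)) := by
  have htb : TotallyBounded (Set.range fun t : G => α t x) := by
    intro U hU
    obtain ⟨U', hU', hU'inv⟩ := hinv U hU
    obtain ⟨F, hFfin, hFcov⟩ := hap U' hU'
    refine ⟨(fun f : G => α f x) '' F, hFfin.image _, ?_⟩
    rintro _ ⟨t, rfl⟩
    have ht : t ∈ {s : G | (α s x, x) ∈ U'} + F := hFcov ▸ Set.mem_univ t
    obtain ⟨p, hp, f, hf, rfl⟩ := ht
    refine Set.mem_iUnion₂.2 ⟨α f x, Set.mem_image_of_mem _ hf, ?_⟩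
    have := hU'inv f (α p x, x) hp
    simpa [hadd, add_comm p f] using this
  constructor
  · exact fun h => h.isComplete
  · intro h
    exact isCompact_iff_totallyBounded_isComplete.2 ⟨htb.closure, h⟩
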